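/- Let p be an odd prime and let F be a finite field with q elements where p does not divide q. If n < e_p(q) · p, then the Sylow p-subgroups of GL(n, F) are abelian. -/

import Mathlib

/-- `e_p(q)`: the multiplicative order of `q` modulo `p`, i.e. the least `i ≥ 1` with
`p ∣ q^i - 1`. -/
noncomputable def multOrderMod (p q : ℕ) : ℕ :=
  orderOf (q : ZMod p)


def piUnitsEquiv {ι : Type*} (M : ι → Type*) [∀ i, Monoid (M i)] :
    (∀ i, M i)ˣ ≃* ∀ i, (M i)ˣ where
  toFun u i := ⟨u.val i, u.inv i, congrFun u.val_inv i, congrFun u.inv_val i⟩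
  invFun v := ⟨fun i => v i, fun i => ↑(v i)⁻¹, by funext i; exact (v i).val_inv,
    by funext i; exact (v i).inv_val⟩
  left_inv u := by ext i; rfl
  right_inv v := by ext i; rfl
  map_mul' u v := by ext i; rfl


theorem ord_dvd_iff (p q : ℕ) (hq : ¬ p ∣ q) (i : ℕ) :
    p ∣ q ^ i - 1 ↔ orderOf (q : ZMod p) ∣ i := by
  have hq1 : 1 ≤ q := Nat.one_le_iff_ne_zero.mpr (by rintro rfl; exact hq (dvd_zero p))
  rw [orderOf_dvd_iff_pow_eq_one]
  have h1 : (1:ℕ) ≤ q ^ i := Nat.one_le_pow _ _ hq1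
  rw [← Nat.modEq_iff_dvd' h1, ← ZMod.natCast_eq_natCast_iff]
  push_cast
  exact ⟨fun h => h.symm, fun h => h.symm⟩


universe u

theorem exists_degree_orderOf_ext (F : Type u) [Field F] [Fintype F] (p : ℕ) (hp : p.Prime)
    (hq : ¬ p ∣ Fintype.card F) :
    ∃ (K : Type u) (_ : Field K) (_ : Algebra F K),
      Module.Finite F K ∧
      Module.finrank F K = orderOf ((Fintype.card F : ℕ) : ZMod p) := by
  classical
  haveI : Fact p.Prime := ⟨hp⟩
  set q := Fintype.card F with hqdef
  have hq2 : 1 < q := Fintype.one_lt_card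
  set e := orderOf ((q : ℕ) : ZMod p) with he
  -- e positive
  have hcop : Nat.Coprime q p := (Nat.coprime_comm.mp ((Nat.Prime.coprime_iff_not_dvd hp).mpr hq))
  have he0 : 0 < e := by
    have h1 : orderOf ((ZMod.unitOfCoprime q hcop : (ZMod p)ˣ) : ZMod p)
        = orderOf (ZMod.unitOfCoprime q hcop) := orderOf_units
    have h2 : ((ZMod.unitOfCoprime q hcop : (ZMod p)ˣ) : ZMod p) = ((q : ℕ) : ZMod p) :=
      ZMod.coe_unitOfCoprime q hcop
    rw [he, ← h2, h1]
    exact orderOf_pos _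
  have hdvd_e : p ∣ q ^ e - 1 := (ord_dvd_iff p q hq e).mpr dvd_rfl
  set a := (q ^ e - 1).factorization p with hadef
  have hqe1 : 1 < q ^ e := Nat.one_lt_pow he0.ne' hq2
  have hne : q ^ e - 1 ≠ 0 := by omega
  have ha : 0 < a := hp.factorization_pos_of_dvd hne hdvd_e
  have hpa_dvd : p ^ a ∣ q ^ e - 1 := Nat.ordProj_dvd _ p
  have hpa1 : 1 < p ^ a := Nat.one_lt_pow ha.ne' hp.one_lt
  -- the cyclotomic polynomial and an irreducible factor
  set C := Polynomial.cyclotomic (p ^ a) F with hC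
  haveI hgirr : Fact (Irreducible (Polynomial.factor C)) := Polynomial.fact_irreducible_factor C
  set g := Polynomial.factor C with hg
  have hgdvd : g ∣ C := Polynomial.factor_dvd_of_natDegree_ne_zero (by
    rw [hC, Polynomial.natDegree_cyclotomic]
    exact (Nat.totient_pos.mpr (by positivity)).ne')
  have hg0 : g ≠ 0 := hgirr.out.ne_zero
  set K := AdjoinRoot g with hK
  let pb : PowerBasis F K := AdjoinRoot.powerBasis hg0
  haveI hfin : Module.Finite F K := Module.Finite.of_basis pb.basis
  haveI : Finite K := Module.finite_of_finite F
  letI : Fintype K := Fintype.ofFinite K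
  set d := Module.finrank F K with hd
  have hcardK : Fintype.card K = q ^ d := Module.card_eq_pow_finrank
  have hcardK1 : 1 < Fintype.card K := Fintype.one_lt_card
  -- the root is a primitive p^a-th root of unity
  set μ : K := AdjoinRoot.root g with hμ
  have hrootC : Polynomial.aeval μ C = 0 := by
    obtain ⟨t, ht⟩ := hgdvd
    rw [ht, map_mul]
    have : Polynomial.aeval μ g = 0 := by
      rw [Polynomial.aeval_def, hμ, AdjoinRoot.algebraMap_eq, AdjoinRoot.eval₂_root]
    rw [this, zero_mul]
  have hpF : (p : F) ≠ 0 := by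
    intro h
    have h1 : ringChar F ∣ p := (CharP.cast_eq_zero_iff F (ringChar F) p).mp h
    have h2 : (ringChar F).Prime := CharP.char_is_prime F (ringChar F)
    have h3 : ringChar F = p := ((Nat.prime_dvd_prime_iff_eq h2 hp).mp h1)
    have h4 : ((q : ℕ) : F) = 0 := FiniteField.cast_card_eq_zero F
    have h5 : ringChar F ∣ q := (CharP.cast_eq_zero_iff F (ringChar F) q).mp h4
    rw [h3] at h5
    exact hq h5
  have hpK : ((p : ℕ) : K) ≠ 0 := by
    have : ((p : ℕ) : K) = algebraMap F K ((p : ℕ) : F) := by push_cast; simp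
    rw [this]
    exact fun hh => hpF ((map_eq_zero _).mp hh)
  haveI : NeZero ((p ^ a : ℕ) : K) := ⟨by push_cast; exact pow_ne_zero _ hpK⟩
  have hCroot : Polynomial.IsRoot (Polynomial.cyclotomic (p ^ a) K) μ := by
    have : Polynomial.cyclotomic (p ^ a) K = C.map (algebraMap F K) := by
      rw [hC, Polynomial.map_cyclotomic]
    rw [Polynomial.IsRoot, this, Polynomial.eval_map, ← Polynomial.aeval_def, hrootC]
  have hprim : IsPrimitiveRoot μ (p ^ a) := Polynomial.isRoot_cyclotomic_iff.mp hCroot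
  have hord : orderOf μ = p ^ a := hprim.eq_orderOf.symm
  -- (i) e ∣ d
  have hedvd : e ∣ d := by
    have hμu : IsUnit μ := hprim.isUnit (by positivity)
    have h1 : orderOf hμu.unit = p ^ a := by
      rw [← hord]
      conv_lhs => rw [← orderOf_units]
      rw [hμu.unit_spec]
    have h2 : p ^ a ∣ Fintype.card Kˣ := h1 ▸ orderOf_dvd_card
    have h3 : Fintype.card Kˣ = q ^ d - 1 := by rw [Fintype.card_units, hcardK]
    have h4 : p ∣ q ^ d - 1 := dvd_trans (dvd_pow_self p ha.ne') (h3 ▸ h2)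
    exact (ord_dvd_iff p q hq d).mp h4
  -- (ii) d ≤ e
  have hall : ∀ x : K, x ^ (q ^ e) = x := by
    set p' := ringChar F with hp'
    haveI : CharP F p' := ringChar.charP F
    have hp'p : p'.Prime := CharP.char_is_prime F p'
    haveI : Fact p'.Prime := ⟨hp'p⟩
    obtain ⟨f, -, hf⟩ := FiniteField.card F p'
    haveI : CharP K p' := charP_of_injective_algebraMap (algebraMap F K).injective p'
    have hqe : q ^ e = p' ^ ((f : ℕ) * e) := by rw [show q = p' ^ (f:ℕ) from hf, pow_mul]
    let S : Subalgebra F K :=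
      { carrier := {x | x ^ (q ^ e) = x}
        mul_mem' := by
          intro x y hx hy
          simp only [Set.mem_setOf_eq] at *
          rw [mul_pow, hx, hy]
        one_mem' := by simp
        add_mem' := by
          intro x y hx hy
          simp only [Set.mem_setOf_eq] at *
          rw [hqe, add_pow_char_pow, ← hqe, hx, hy]
        zero_mem' := by
          simp only [Set.mem_setOf_eq]
          exact zero_pow (by positivity)
        algebraMap_mem' := by
          intro c
          simp only [Set.mem_setOf_eq]
          rw [← map_pow, FiniteField.pow_card_pow] }
    have hμS : μ ∈ S := by
      show μ ^ (q ^ e) = μ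
      have h1 : μ ^ (q ^ e - 1) = 1 := orderOf_dvd_iff_pow_eq_one.mp (hord ▸ hpa_dvd)
      have h2 : q ^ e = (q ^ e - 1) + 1 := by omega
      rw [h2, pow_succ, h1, one_mul]
    have hle : Algebra.adjoin F ({μ} : Set K) ≤ S :=
      Algebra.adjoin_le (Set.singleton_subset_iff.mpr hμS)
    rw [hμ, AdjoinRoot.adjoinRoot_eq_top] at hle
    intro x
    exact hle (Algebra.mem_top)
  have hd_le : d ≤ e := by
    set P : Polynomial K := Polynomial.X ^ (q ^ e) - Polynomial.X with hP
    have hPdeg : P.natDegree = q ^ e := FiniteField.X_pow_card_sub_X_natDegree_eq K hqe1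
    have hP0 : P ≠ 0 := FiniteField.X_pow_card_sub_X_ne_zero K hqe1
    have hsub : Finset.univ ⊆ P.roots.toFinset := by
      intro x _
      rw [Multiset.mem_toFinset, Polynomial.mem_roots hP0]
      simp [hP, Polynomial.IsRoot, hall x]
    have hcard_le : Fintype.card K ≤ q ^ e := by
      calc Fintype.card K = Finset.univ.card := Finset.card_univ.symm
        _ ≤ P.roots.toFinset.card := Finset.card_le_card hsub
        _ ≤ Multiset.card P.roots := P.roots.toFinset_card_le
        _ ≤ P.natDegree := P.card_roots'
        _ = q ^ e := hPdeg
    rw [hcardK] at hcard_le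
    exact (Nat.pow_le_pow_iff_right hq2).mp hcard_le
  have hd0 : 0 < d := by
    rcases Nat.eq_zero_or_pos d with h | h
    · rw [h, pow_zero] at hcardK; omega
    · exact h
  have hde : d = e := le_antisymm hd_le (Nat.le_of_dvd hd0 hedvd)
  exact ⟨K, inferInstance, inferInstance, hfin, hde⟩

theorem val_qpow_sub_one (p q : ℕ) (hp : p.Prime) (hodd : Odd p) (hq : ¬ p ∣ q) (hq2 : 1 < q)
    (j : ℕ) (hj0 : 0 < j) (hjp : j < orderOf ((q : ℕ) : ZMod p) * p) :
    (q ^ j - 1).factorization p =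
      if orderOf ((q : ℕ) : ZMod p) ∣ j then
        (q ^ (orderOf ((q : ℕ) : ZMod p)) - 1).factorization p else 0 := by
  set e := orderOf ((q : ℕ) : ZMod p) with he
  haveI : Fact p.Prime := ⟨hp⟩
  split_ifs with hdvd
  · obtain ⟨m, rfl⟩ := hdvd
    have he0 : 0 < e := by
      rcases Nat.eq_zero_or_pos e with h | h
      · rw [h] at hj0; simp at hj0
      · exact h
    have hm0 : 0 < m := by
      rcases Nat.eq_zero_or_pos m with h | h
      · rw [h] at hj0; simp at hj0
      · exact h
    have hmp : m < p := by
      by_contra h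
      push_neg at h
      have := Nat.mul_le_mul_left e h
      omega
    have hx1 : 1 < q ^ e := Nat.one_lt_pow he0.ne' hq2
    have hxy : p ∣ q ^ e - 1 := (ord_dvd_iff p q hq e).mpr dvd_rfl
    have hx : ¬ p ∣ q ^ e := fun h => hq (hp.dvd_of_dvd_pow h)
    have key := padicValNat.pow_sub_pow (p := p) hodd (x := q ^ e) (y := 1) hx1
      (by simpa using hxy) hx hm0.ne'
    simp only [one_pow] at key
    have hpm : padicValNat p m = 0 :=
      padicValNat.eq_zero_of_not_dvd (fun h => absurd (Nat.le_of_dvd hm0 h) (by omega))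
    rw [Nat.factorization_def _ hp, Nat.factorization_def _ hp, pow_mul, key, hpm, add_zero]
  · exact Nat.factorization_eq_zero_of_not_dvd
      (fun h => hdvd ((ord_dvd_iff p q hq j).mp h))


theorem val_GL (p : ℕ) (hp : p.Prime) (hodd : Odd p) (F : Type*) [Field F] [Fintype F]
    (hq : ¬ p ∣ Fintype.card F) (n : ℕ)
    (hn : n < orderOf ((Fintype.card F : ℕ) : ZMod p) * p) :
    (Nat.card (GL (Fin n) F)).factorization p =
      (n / orderOf ((Fintype.card F : ℕ) : ZMod p)) *
        (Fintype.card F ^ (orderOf ((Fintype.card F : ℕ) : ZMod p)) - 1).factorization p := by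
  classical
  set q := Fintype.card F with hqdef
  set e := orderOf ((q : ℕ) : ZMod p) with he
  set a := (q ^ e - 1).factorization p with ha
  have hq2 : 1 < q := Fintype.one_lt_card
  rw [Matrix.card_GL_field]
  have hterm : ∀ i : Fin n, q ^ n - q ^ (i : ℕ) = q ^ (i : ℕ) * (q ^ (n - (i : ℕ)) - 1) := by
    intro i
    have hi : (i : ℕ) < n := i.2
    rw [Nat.mul_sub, mul_one, ← pow_add]
    congr 2
    omega
  have hne : ∀ i : Fin n, q ^ n - q ^ (i : ℕ) ≠ 0 := by
    intro i
    have hi : (i : ℕ) < n := i.2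
    have := Nat.pow_lt_pow_right hq2 hi
    omega
  have hprod : (∏ i : Fin n, (q ^ n - q ^ (i : ℕ))).factorization p
      = ∑ i : Fin n, (q ^ n - q ^ (i : ℕ)).factorization p := by
    rw [Nat.factorization_prod (fun i _ => hne i)]
    exact Finset.sum_apply' p
  rw [hprod]
  have hstep : ∀ i : Fin n, (q ^ n - q ^ (i : ℕ)).factorization p
      = (q ^ (n - (i : ℕ)) - 1).factorization p := by
    intro i
    rw [hterm i, Nat.factorization_mul (pow_ne_zero _ (by omega)) (by
      have := hne i; rw [hterm i] at this; exact right_ne_zero_of_mul this)]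
    have h0 : (q ^ (i : ℕ)).factorization p = 0 := by
      apply Nat.factorization_eq_zero_of_not_dvd
      exact fun h => hq (hp.dvd_of_dvd_pow h)
    rw [Finsupp.add_apply, h0, zero_add]
  rw [Finset.sum_congr rfl (fun i _ => hstep i)]
  -- reindex sum
  have h1 : ∑ i : Fin n, (q ^ (n - (i : ℕ)) - 1).factorization p
      = ∑ i ∈ Finset.range n, (q ^ (n - i) - 1).factorization p :=
    Fin.sum_univ_eq_sum_range (fun i => (q ^ (n - i) - 1).factorization p) n
  rw [h1]
  have h2 : ∑ i ∈ Finset.range n, (q ^ (n - i) - 1).factorization p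
      = ∑ i ∈ Finset.range n, (q ^ (i + 1) - 1).factorization p := by
    rw [← Finset.sum_range_reflect (fun i => (q ^ (i + 1) - 1).factorization p) n]
    apply Finset.sum_congr rfl
    intro i hi
    rw [Finset.mem_range] at hi
    have h4 : n - 1 - i + 1 = n - i := by omega
    rw [h4]
  rw [h2]
  have h3 : ∀ i ∈ Finset.range n, (q ^ (i + 1) - 1).factorization p
      = if e ∣ (i + 1) then a else 0 := by
    intro i hi
    rw [Finset.mem_range] at hi
    exact val_qpow_sub_one p q hp hodd hq hq2 (i + 1) (by omega) (by rw [← he]; omega)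
  rw [Finset.sum_congr rfl h3, ← Finset.sum_filter]
  rw [Finset.sum_const, smul_eq_mul]
  congr 1
  -- card of filter = n / e
  rw [← Nat.Ioc_filter_dvd_card_eq_div n e]
  refine Finset.card_bij' (fun i _ => i + 1) (fun j _ => j - 1) ?_ ?_ ?_ ?_
  · intro i hi
    simp only [Finset.mem_filter, Finset.mem_range] at hi
    simp only [Finset.mem_filter, Finset.mem_Ioc]
    exact ⟨⟨by omega, by omega⟩, hi.2⟩
  · intro j hj
    simp only [Finset.mem_filter, Finset.mem_Ioc] at hj
    simp only [Finset.mem_filter, Finset.mem_range]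
    constructor
    · omega
    · have h : j - 1 + 1 = j := by omega
      rw [h]
      exact hj.2
  · intro i hi
    show i + 1 - 1 = i
    omega
  · intro j hj
    simp only [Finset.mem_filter, Finset.mem_Ioc] at hj
    show j - 1 + 1 = j
    omega

/-- Let `p` be an odd prime and `F` a finite field with `q` elements, `p ∤ q`.
If `n < e_p(q) · p`, then the Sylow `p`-subgroups of `GL(n, F)` are abelian. -/
theorem sylow_abelian_of_lt_multOrder_mul (p : ℕ) (hp : p.Prime) (hodd : Odd p)
    (F : Type*) [Field F] [Fintype F] (hq : ¬p ∣ Fintype.card F)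
    (n : ℕ) (hn : n < multOrderMod p (Fintype.card F) * p) :
    ∀ P : Sylow p (GL (Fin n) F), IsMulCommutative (P : Subgroup (GL (Fin n) F)) := by
  classical
  intro P
  haveI : Fact p.Prime := ⟨hp⟩
  set q := Fintype.card F with hqdef
  set e := orderOf ((q : ℕ) : ZMod p) with he
  have hn' : n < e * p := hn
  set a := (q ^ e - 1).factorization p with ha
  have hq2 : 1 < q := Fintype.one_lt_card
  obtain ⟨K, hKfield, hKalg, hKfin, hKrank⟩ := exists_degree_orderOf_ext F p hp hq
  letI := hKfield
  letI := hKalg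
  haveI := hKfin
  haveI : Finite K := Module.finite_of_finite F
  letI : Fintype K := Fintype.ofFinite K
  have hcardK : Fintype.card K = q ^ e := by
    rw [Module.card_eq_pow_finrank (K := F) (V := K), hKrank, ← he]
  have he0 : 0 < e := by
    rcases Nat.eq_zero_or_pos e with h | h
    · rw [h, pow_zero] at hcardK
      have : 1 < Fintype.card K := Fintype.one_lt_card
      omega
    · exact h
  have hqe1 : 1 < q ^ e := Nat.one_lt_pow he0.ne' hq2
  set k := n / e with hk
  set r := n % e with hr
  set A := ((Fin k → K) × (Fin r → F)) with hA
  have hrankA : Module.finrank F A = n := by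
    show Module.finrank F ((Fin k → K) × (Fin r → F)) = n
    rw [Module.finrank_prod, Module.finrank_pi_fintype, Module.finrank_pi]
    simp only [Finset.sum_const, Finset.card_univ, Fintype.card_fin, smul_eq_mul, hKrank, ← he]
    rw [hk, hr, mul_comm]
    exact Nat.div_add_mod n e
  let b : Module.Basis (Fin n) F A := Module.finBasisOfFinrankEq F A hrankA
  let ψalg : A →ₐ[F] Matrix (Fin n) (Fin n) F :=
    (algEquivMatrix b).toAlgHom.comp (Algebra.lmul F A)
  have hψinj : Function.Injective ψalg := by
    apply Function.Injective.comp (g := (algEquivMatrix b))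
    · exact (algEquivMatrix b).injective
    · exact Algebra.lmul_injective
  let φ : Aˣ →* GL (Fin n) F := Units.map ψalg.toRingHom.toMonoidHom
  have hφinj : Function.Injective φ := Units.map_injective hψinj
  -- cardinality of Aˣ
  have hcardAu : Nat.card Aˣ = (q ^ e - 1) ^ k * (q - 1) ^ r := by
    rw [Nat.card_congr (MulEquiv.prodUnits.toEquiv), Nat.card_prod,
      Nat.card_congr (piUnitsEquiv _).toEquiv, Nat.card_congr (piUnitsEquiv _).toEquiv,
      Nat.card_pi, Nat.card_pi]
    simp only [Finset.prod_const, Finset.card_univ, Fintype.card_fin]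
    rw [Nat.card_units, Nat.card_units, Nat.card_eq_fintype_card, Nat.card_eq_fintype_card,
      hcardK]
  have hvalAu : (Nat.card Aˣ).factorization p = k * a := by
    rw [hcardAu, Nat.factorization_mul (pow_ne_zero _ (by omega)) (pow_ne_zero _ (by omega))]
    rw [Finsupp.add_apply, Nat.factorization_pow, Nat.factorization_pow]
    simp only [Finsupp.smul_apply, smul_eq_mul]
    have hzero : r * (q - 1).factorization p = 0 := by
      rcases Nat.eq_zero_or_pos r with h | h
      · rw [h, zero_mul]
      · have her : 1 < e := by
          have := Nat.mod_lt n (y := e) he0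
          omega
        have : (q - 1).factorization p = 0 := by
          apply Nat.factorization_eq_zero_of_not_dvd
          intro hdvd
          have : p ∣ q ^ 1 - 1 := by rwa [pow_one]
          have := (ord_dvd_iff p q hq 1).mp this
          rw [← he] at this
          have := Nat.le_of_dvd one_pos this
          omega
        rw [this, mul_zero]
    rw [hzero, add_zero, ← ha]
  -- Sylow subgroup of Aˣ mapped into GL
  haveI : Finite Aˣ := inferInstance
  let Q : Sylow p Aˣ := Classical.arbitrary _
  have hcardQ : Nat.card Q = p ^ (k * a) := by
    rw [Q.card_eq_multiplicity, hvalAu]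
  let H : Subgroup (GL (Fin n) F) := Subgroup.map φ Q.1
  have hcardH : Nat.card H = p ^ (k * a) := by
    rw [← hcardQ]
    exact (Nat.card_congr (Subgroup.equivMapOfInjective Q.1 φ hφinj).toEquiv).symm
  have hGLval : (Nat.card (GL (Fin n) F)).factorization p = k * a := by
    have := val_GL p hp hodd F hq n (by rw [← he]; exact hn')
    rw [← hqdef, ← he, ← ha, ← hk] at this
    exact this
  let R : Sylow p (GL (Fin n) F) := Sylow.ofCard H (by rw [hcardH, hGLval])
  obtain ⟨x, hx⟩ := MulAction.exists_smul_eq (GL (Fin n) F) R P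
  haveI hQcomm : IsMulCommutative Q.1 := ⟨⟨fun a b => Subtype.ext (mul_comm a.1 b.1)⟩⟩
  have hPH : (P : Subgroup (GL (Fin n) F)) =
      Subgroup.map (MulAut.conj x).toMonoidHom H := by
    rw [← hx]
    rfl
  rw [hPH]
  infer_instance
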